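/- arXiv:math/0110076 — 2 statements merged into one kernel-verified Lean document; each statement's English description precedes it below -/
import Mathlib

section
/- Let Y be a pointed topological space, ε : Y → Y the constant map to the base point, π : Y ∨ Y → Y the pinch (fold) map, and ι : Y → Y ∨ Y the inclusion onto the second wedge summand. Define u : Y ∨ Y → Y ∨ Y as the composite u = ι ∘ π ∘ (1_Y ∨ ε). Then cat u = cat Y. -/
open ContinuousMap Set

section LS

variable {X Y : Type*} [TopologicalSpace X] [TopologicalSpace Y]

/-- A set `A ⊆ X` is `f`-categorical if it is open and the restriction of `f`
to `A` is null-homotopic. -/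
def IsCatSet (f : C(X, Y)) (A : Set X) : Prop :=
  IsOpen A ∧ ContinuousMap.Nullhomotopic (f.restrict A)

/-- The Lusternik–Schnirelmann category of a map `f : X → Y`: the minimal number `n`
such that `X` admits a covering by `n` `f`-categorical sets. -/
noncomputable def catMap (f : C(X, Y)) : ℕ :=
  sInf {n : ℕ | ∃ A : Fin n → Set X, (∀ i, IsCatSet f (A i)) ∧ (⋃ i, A i) = Set.univ}

/-- The Lusternik–Schnirelmann category of a space: `cat X = cat (id X)`. -/
noncomputable def catSpace (X : Type*) [TopologicalSpace X] : ℕ :=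
  catMap (ContinuousMap.id X)

/-- The `k`-fold iterate of a continuous self-map. -/
def cIter (f : C(X, X)) : ℕ → C(X, X)
  | 0 => ContinuousMap.id X
  | n + 1 => f.comp (cIter f n)

theorem cIter_basepoint (f : C(X, X)) {x₀ : X} (hf : f x₀ = x₀) :
    ∀ k, cIter f k x₀ = x₀
  | 0 => rfl
  | k + 1 => by
      simp only [cIter, ContinuousMap.comp_apply, cIter_basepoint f hf k, hf]

end LS

section Wedge

variable (X A : Type*) [TopologicalSpace X] [TopologicalSpace A] (x₀ : X) (a₀ : A)

/-- The relation identifying the base points in the disjoint union. -/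
inductive WedgeRel : X ⊕ A → X ⊕ A → Prop
  | base : WedgeRel (Sum.inl x₀) (Sum.inr a₀)

/-- The wedge (one-point union) of two pointed spaces. -/
def Wedge : Type _ := Quot (WedgeRel X A x₀ a₀)

instance : TopologicalSpace (Wedge X A x₀ a₀) :=
  inferInstanceAs (TopologicalSpace (Quot _))

/-- Projection onto the wedge. -/
def Wedge.mk : X ⊕ A → Wedge X A x₀ a₀ := Quot.mk _

/-- The base point of the wedge. -/
def Wedge.pt : Wedge X A x₀ a₀ := Wedge.mk X A x₀ a₀ (Sum.inl x₀)

variable {X A x₀ a₀}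
variable {Y B : Type*} [TopologicalSpace Y] [TopologicalSpace B] {y₀ : Y} {b₀ : B}

/-- The wedge `f ∨ g` of two pointed maps. -/
def wedgeMap (f : C(X, Y)) (g : C(A, B)) (hf : f x₀ = y₀) (hg : g a₀ = b₀) :
    C(Wedge X A x₀ a₀, Wedge Y B y₀ b₀) where
  toFun := Quot.lift (fun p => Wedge.mk Y B y₀ b₀ (Sum.map f g p)) (by
    rintro _ _ ⟨⟩
    simp only [Sum.map_inl, Sum.map_inr, hf, hg]
    exact Quot.sound WedgeRel.base)
  continuous_toFun :=
    continuous_quot_lift _ ((continuous_quot_mk).comp (f.continuous.sumMap g.continuous))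

@[simp] theorem wedgeMap_mk (f : C(X, Y)) (g : C(A, B)) (hf : f x₀ = y₀) (hg : g a₀ = b₀)
    (p : X ⊕ A) :
    wedgeMap f g hf hg (Wedge.mk X A x₀ a₀ p) = Wedge.mk Y B y₀ b₀ (Sum.map f g p) :=
  rfl

/-- The pinch (fold) map `X ∨ X → X`, induced by the identity on each summand. -/
def pinch (X : Type*) [TopologicalSpace X] (x₀ : X) : C(Wedge X X x₀ x₀, X) where
  toFun := Quot.lift (Sum.elim id id) (by rintro _ _ ⟨⟩; rfl)
  continuous_toFun := continuous_quot_lift _ (continuous_id.sumElim continuous_id)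

@[simp] theorem pinch_mk (X : Type*) [TopologicalSpace X] (x₀ : X) (p : X ⊕ X) :
    pinch X x₀ (Wedge.mk X X x₀ x₀ p) = Sum.elim id id p :=
  rfl

/-- The inclusion of `X` onto the second summand of `X ∨ X`. -/
def inclRight (X : Type*) [TopologicalSpace X] (x₀ : X) : C(X, Wedge X X x₀ x₀) where
  toFun x := Wedge.mk X X x₀ x₀ (Sum.inr x)
  continuous_toFun := (continuous_quot_mk).comp continuous_inr

@[simp] theorem inclRight_apply (X : Type*) [TopologicalSpace X] (x₀ : X) (x : X) :
    inclRight X x₀ x = Wedge.mk X X x₀ x₀ (Sum.inr x) :=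
  rfl

/-- The map `u = ι ∘ π ∘ (1 ∨ ε) : Y ∨ Y → Y ∨ Y` from the paper. -/
def uMap (Y : Type*) [TopologicalSpace Y] (y₀ : Y) : C(Wedge Y Y y₀ y₀, Wedge Y Y y₀ y₀) :=
  (inclRight Y y₀).comp ((pinch Y y₀).comp
    (wedgeMap (ContinuousMap.id Y) (ContinuousMap.const Y y₀) rfl rfl))

/-- The map `v = ι ∘ π ∘ (1 ∨ f) : X ∨ X → X ∨ X` from the paper. -/
def vMap {X : Type*} [TopologicalSpace X] {x₀ : X} (f : C(X, X)) (hf : f x₀ = x₀) :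
    C(Wedge X X x₀ x₀, Wedge X X x₀ x₀) :=
  (inclRight X x₀).comp ((pinch X x₀).comp (wedgeMap (ContinuousMap.id X) f rfl hf))

/-- `u` is a pointed map. -/
theorem uMap_pt (Y : Type*) [TopologicalSpace Y] (y₀ : Y) :
    uMap Y y₀ (Wedge.pt Y Y y₀ y₀) = Wedge.pt Y Y y₀ y₀ := by
  simp only [uMap, Wedge.pt, ContinuousMap.comp_apply, wedgeMap_mk, Sum.map_inl,
    ContinuousMap.id_apply, pinch_mk, Sum.elim_inl, id_eq, inclRight_apply]
  exact (Quot.sound WedgeRel.base).symm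

/-- `v` is a pointed map. -/
theorem vMap_pt {X : Type*} [TopologicalSpace X] {x₀ : X} (f : C(X, X)) (hf : f x₀ = x₀) :
    vMap f hf (Wedge.pt X X x₀ x₀) = Wedge.pt X X x₀ x₀ := by
  simp only [vMap, Wedge.pt, ContinuousMap.comp_apply, wedgeMap_mk, Sum.map_inl,
    ContinuousMap.id_apply, pinch_mk, Sum.elim_inl, id_eq, inclRight_apply]
  exact (Quot.sound WedgeRel.base).symm

end Wedge

theorem catCover_comp {W X Y Z : Type*} [TopologicalSpace W] [TopologicalSpace X]
    [TopologicalSpace Y] [TopologicalSpace Z] (f : C(X, Y)) (g : C(Y, Z)) (h : C(W, X))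
    {n : ℕ} (H : ∃ A : Fin n → Set X, (∀ i, IsCatSet f (A i)) ∧ (⋃ i, A i) = Set.univ) :
    ∃ B : Fin n → Set W,
      (∀ i, IsCatSet ((g.comp f).comp h) (B i)) ∧ (⋃ i, B i) = Set.univ := by
  obtain ⟨A, hA, hcov⟩ := H
  refine ⟨fun i => h ⁻¹' A i, fun i => ?_, ?_⟩
  · refine ⟨(hA i).1.preimage h.continuous, ?_⟩
    let h' : C(h ⁻¹' A i, A i) :=
      ⟨fun b => ⟨h b, b.2⟩, Continuous.subtype_mk (h.continuous.comp continuous_subtype_val) _⟩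
    have e : ((g.comp f).comp h).restrict (h ⁻¹' A i) = g.comp ((f.restrict (A i)).comp h') := by
      ext b; rfl
    rw [e]
    exact ((hA i).2.comp_left h').comp_right g
  · rw [← Set.preimage_iUnion, hcov, Set.preimage_univ]

/-- for `u = ι ∘ π ∘ (1_Y ∨ ε) : Y ∨ Y → Y ∨ Y`, one has `cat u = cat Y`. -/
theorem catMap_uMap {Y : Type*} [TopologicalSpace Y] (y₀ : Y) :
    catMap (uMap Y y₀) = catSpace Y := by
  let ι₁ : C(Y, Wedge Y Y y₀ y₀) :=
    ⟨fun y => Wedge.mk Y Y y₀ y₀ (Sum.inl y), continuous_quot_mk.comp continuous_inl⟩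
  let r : C(Wedge Y Y y₀ y₀, Y) :=
    (pinch Y y₀).comp (wedgeMap (ContinuousMap.id Y) (ContinuousMap.const Y y₀) rfl rfl)
  have e1 : ((pinch Y y₀).comp (uMap Y y₀)).comp ι₁ = ContinuousMap.id Y := by
    refine ContinuousMap.ext fun y => ?_
    show (pinch Y y₀) ((uMap Y y₀) (Wedge.mk Y Y y₀ y₀ (Sum.inl y))) = y
    simp [uMap]
    rfl
  have e2 : ((inclRight Y y₀).comp (ContinuousMap.id Y)).comp r = uMap Y y₀ := by
    refine ContinuousMap.ext fun x => ?_
    have hp : ∀ p : Y ⊕ Y,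
        (((inclRight Y y₀).comp (ContinuousMap.id Y)).comp r) (Wedge.mk Y Y y₀ y₀ p)
          = (uMap Y y₀) (Wedge.mk Y Y y₀ y₀ p) := by
      intro p
      simp [uMap, r]
    exact @Quot.ind _ _ (fun x =>
      (((inclRight Y y₀).comp (ContinuousMap.id Y)).comp r) x = (uMap Y y₀) x) hp x
  have key : {n : ℕ | ∃ A : Fin n → Set (Wedge Y Y y₀ y₀),
        (∀ i, IsCatSet (uMap Y y₀) (A i)) ∧ (⋃ i, A i) = Set.univ}
      = {n : ℕ | ∃ A : Fin n → Set Y,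
        (∀ i, IsCatSet (ContinuousMap.id Y) (A i)) ∧ (⋃ i, A i) = Set.univ} := by
    ext n
    simp only [Set.mem_setOf_eq]
    constructor
    · intro H
      have h2 := catCover_comp (uMap Y y₀) (pinch Y y₀) ι₁ H
      rwa [e1] at h2
    · intro H
      have h2 := catCover_comp (ContinuousMap.id Y) (inclRight Y y₀) r H
      rwa [e2] at h2
  unfold catSpace catMap
  exact congrArg sInf key
end

section
/- Let f : X → X be a continuous pointed self-map of a pointed topological space, π : X ∨ X → X the pinch map, ι : X → X ∨ X the inclusion onto the second summand, and v = ι ∘ π ∘ (1_X ∨ f) : X ∨ X → X ∨ X. Then for every k > 1 one has cat(v^k) = cat(f^{k-1}). -/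
open ContinuousMap Set

section Aux

variable {X : Type*} [TopologicalSpace X] {x₀ : X}

/-- The inclusion of `X` onto the first summand of `X ∨ X`. -/
def inclLeft (X : Type*) [TopologicalSpace X] (x₀ : X) : C(X, Wedge X X x₀ x₀) where
  toFun x := Wedge.mk X X x₀ x₀ (Sum.inl x)
  continuous_toFun := (continuous_quot_mk).comp continuous_inl

@[simp] theorem inclLeft_apply (X : Type*) [TopologicalSpace X] (x₀ : X) (x : X) :
    inclLeft X x₀ x = Wedge.mk X X x₀ x₀ (Sum.inl x) := rfl

/-- Corestriction of a continuous map to a subset containing its range. -/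
def cCodRestrict {Z : Type*} [TopologicalSpace Z] (f : C(Z, X)) (s : Set X)
    (h : ∀ z, f z ∈ s) : C(Z, s) :=
  ⟨fun z => ⟨f z, h z⟩, f.continuous.subtype_mk h⟩

@[simp] theorem cCodRestrict_apply {Z : Type*} [TopologicalSpace Z] (f : C(Z, X)) (s : Set X)
    (h : ∀ z, f z ∈ s) (z : Z) : (cCodRestrict f s h z : X) = f z := rfl

/-- The map `g = π ∘ (1 ∨ f) : X ∨ X → X`. -/
def gMap (f : C(X, X)) (hf : f x₀ = x₀) : C(Wedge X X x₀ x₀, X) :=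
  (pinch X x₀).comp (wedgeMap (ContinuousMap.id X) f rfl hf)

@[simp] theorem gMap_mk_inl (f : C(X, X)) (hf : f x₀ = x₀) (x : X) :
    gMap f hf (Wedge.mk X X x₀ x₀ (Sum.inl x)) = x := rfl

@[simp] theorem gMap_mk_inr (f : C(X, X)) (hf : f x₀ = x₀) (x : X) :
    gMap f hf (Wedge.mk X X x₀ x₀ (Sum.inr x)) = f x := rfl

@[simp] theorem pinch_inclRight (x : X) : pinch X x₀ (inclRight X x₀ x) = x := by simp

theorem vMap_eq (f : C(X, X)) (hf : f x₀ = x₀) :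
    vMap f hf = (inclRight X x₀).comp (gMap f hf) := rfl

@[simp] theorem vMap_inclRight (f : C(X, X)) (hf : f x₀ = x₀) (x : X) :
    vMap f hf (inclRight X x₀ x) = inclRight X x₀ (f x) := by
  rw [vMap_eq]; simp

theorem cIter_vMap_apply (f : C(X, X)) (hf : f x₀ = x₀) :
    ∀ (k : ℕ) (w : Wedge X X x₀ x₀),
      cIter (vMap f hf) (k + 1) w = inclRight X x₀ (cIter f k (gMap f hf w))
  | 0, w => rfl
  | k + 1, w => by
      have h1 : cIter (vMap f hf) (k + 1 + 1) w
          = vMap f hf (cIter (vMap f hf) (k + 1) w) := rfl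
      rw [h1, cIter_vMap_apply f hf k w, vMap_inclRight]
      rfl

end Aux

/-- for a pointed self-map `f : X → X` and `v = ι ∘ π ∘ (1_X ∨ f)`,
for every `k > 1` one has `cat (v^k) = cat (f^(k-1))`. -/
theorem catMap_cIter_vMap {X : Type*} [TopologicalSpace X] {x₀ : X}
    (f : C(X, X)) (hf : f x₀ = x₀) :
    ∀ k : ℕ, 1 < k → catMap (cIter (vMap f hf) k) = catMap (cIter f (k - 1)) := by
  intro k hk
  obtain ⟨m, rfl⟩ : ∃ m, k = m + 2 := ⟨k - 2, by omega⟩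
  have hk1 : m + 2 - 1 = m + 1 := rfl
  rw [hk1]
  unfold catMap
  congr 1
  ext n
  simp only [Set.mem_setOf_eq]
  constructor
  · rintro ⟨B, hB, hcov⟩
    refine ⟨fun i => (inclLeft X x₀) ⁻¹' (B i), fun i => ?_, ?_⟩
    · obtain ⟨hBopen, hBnull⟩ := hB i
      refine ⟨hBopen.preimage (inclLeft X x₀).continuous, ?_⟩
      set A : Set X := (inclLeft X x₀) ⁻¹' (B i) with hA
      have j' : C(A, B i) :=
        cCodRestrict ((inclLeft X x₀).restrict A) (B i) fun a => a.2
      have key : (cIter f (m + 1)).restrict A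
          = (pinch X x₀).comp (((cIter (vMap f hf) (m + 2)).restrict (B i)).comp
            (cCodRestrict ((inclLeft X x₀).restrict A) (B i) fun a => a.2)) := by
        ext a
        show cIter f (m + 1) a.1
          = pinch X x₀ (cIter (vMap f hf) (m + 2) (inclLeft X x₀ a.1))
        rw [cIter_vMap_apply f hf (m + 1) (inclLeft X x₀ a.1)]
        simp
      rw [key]
      exact (hBnull.comp_left _).comp_right _
    · rw [← Set.preimage_iUnion, hcov, Set.preimage_univ]
  · rintro ⟨A, hA, hcov⟩
    refine ⟨fun i => (gMap f hf) ⁻¹' (A i), fun i => ?_, ?_⟩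
    · obtain ⟨hAopen, hAnull⟩ := hA i
      refine ⟨hAopen.preimage (gMap f hf).continuous, ?_⟩
      set B : Set (Wedge X X x₀ x₀) := (gMap f hf) ⁻¹' (A i) with hBdef
      have key : (cIter (vMap f hf) (m + 2)).restrict B
          = (inclRight X x₀).comp (((cIter f (m + 1)).restrict (A i)).comp
            (cCodRestrict ((gMap f hf).restrict B) (A i) fun b => b.2)) := by
        ext b
        show cIter (vMap f hf) (m + 2) b.1
          = inclRight X x₀ (cIter f (m + 1) (gMap f hf b.1))
        exact cIter_vMap_apply f hf (m + 1) b.1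
      rw [key]
      exact (hAnull.comp_left _).comp_right _
    · rw [← Set.preimage_iUnion, hcov, Set.preimage_univ]
end
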